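/- Let G be a labeled graph with vertices v_1,…,v_n and suppose the vertex v_i is oriented, i.e. corank(A(G)+E) ≤ corank(B_i(G)), where B_i(G) = A(G)+E+E_{ii}. Then corank(B_i(G)) ≠ corank(A(G − v_i)+E), where G − v_i denotes the labeled graph obtained from G by deleting the vertex v_i. -/

import Mathlib

/-- A *labeled graph*: a finite simple graph whose vertices (a finite set of
natural numbers) carry a framing in `ZMod 2` and a sign (`true` = `+`, `false` = `-`). -/
structure LGraph where
  verts : Finset ℕ
  adj : ℕ → ℕ → Bool
  symm : ∀ x y, adj x y = adj y x
  loopless : ∀ x, adj x x = false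
  adj_mem : ∀ x y, adj x y = true → x ∈ verts ∧ y ∈ verts
  fr : ℕ → ZMod 2
  sgn : ℕ → Bool

namespace LGraph

/-- The adjacency matrix over `ZMod 2`, with framings on the diagonal. -/
def A (G : LGraph) : Matrix G.verts G.verts (ZMod 2) :=
  fun u v => if (u : ℕ) = (v : ℕ) then G.fr u else (if G.adj u v then 1 else 0)

/-- `corank (A(G) + E)` over `ZMod 2`. -/
noncomputable def corankAE (G : LGraph) : ℕ :=
  Fintype.card G.verts - (G.A + 1).rank

/-- `corank A(G)` over `ZMod 2`. -/
noncomputable def corankA (G : LGraph) : ℕ :=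
  Fintype.card G.verts - G.A.rank

end LGraph
namespace LGraph

/-- `corank B_i(G)` where `B_i(G) = A(G) + E + E_{ii}`. -/
noncomputable def corankB (G : LGraph) (v : G.verts) : ℕ :=
  Fintype.card G.verts - (G.A + 1 + Matrix.single v v 1).rank

/-- The writhe number `w_i = (-1)^(corank B_i(G)) · sign(v_i)` of a vertex. -/
noncomputable def wr (G : LGraph) (v : G.verts) : ℤ :=
  (-1) ^ (G.corankB v) * (if G.sgn v then 1 else -1)

/-- The writhe number `w(G) = Σ_i w_i` of a labeled graph. -/
noncomputable def writhe (G : LGraph) : ℤ := ∑ v : G.verts, G.wr v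

end LGraph
namespace LGraph

/-- The labeled graph obtained from `G` by deleting the vertex `v`. -/
def delete (G : LGraph) (v : ℕ) : LGraph where
  verts := G.verts.erase v
  adj := fun x y => decide (x ≠ v) && decide (y ≠ v) && G.adj x y
  symm := by
    intro x y
    cases h1 : decide (x ≠ v) <;> cases h2 : decide (y ≠ v) <;>
      simp [h1, h2, G.symm x y]
  loopless := by intro x; simp [G.loopless x]
  adj_mem := by
    intro x y h
    simp only [Bool.and_eq_true, decide_eq_true_eq] at h
    exact ⟨Finset.mem_erase.2 ⟨h.1.1, (G.adj_mem x y h.2).1⟩,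
           Finset.mem_erase.2 ⟨h.1.2, (G.adj_mem x y h.2).2⟩⟩
  fr := G.fr
  sgn := G.sgn

end LGraph
open Matrix LinearMap Module Finset

section Helpers

variable {m : Type*} [Fintype m] [DecidableEq m] {F : Type*} [Field F]

lemma rank_add_corank' (M : Matrix m m F) :
    M.rank + Module.finrank F (LinearMap.ker M.mulVecLin) = Fintype.card m := by
  rw [Matrix.rank, LinearMap.finrank_range_add_finrank_ker]
  simp [Module.finrank_fintype_fun_eq_card]


variable {V : Type*} [AddCommGroup V] [Module F V] [FiniteDimensional F V]

lemma finrank_split_zero (p p0 : Submodule F V) (φ : V →ₗ[F] F)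
    (hmem : ∀ x ∈ p, (x ∈ p0 ↔ φ x = 0)) (hle : p0 ≤ p)
    (hex : ∀ x ∈ p, φ x = 0) : Module.finrank F p = Module.finrank F p0 := by
  have : p = p0 := le_antisymm (fun x hx => (hmem x hx).2 (hex x hx)) hle
  rw [this]

lemma finrank_split_pos (p p0 : Submodule F V) (φ : V →ₗ[F] F)
    (hmem : ∀ x ∈ p, (x ∈ p0 ↔ φ x = 0)) (hle : p0 ≤ p)
    (hex : ∃ x ∈ p, φ x ≠ 0) : Module.finrank F p = Module.finrank F p0 + 1 := by
  classical
  set ψ : p →ₗ[F] F := φ.comp p.subtype with hψ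
  have hker : LinearMap.ker ψ = Submodule.comap p.subtype p0 := by
    ext x
    simp only [LinearMap.mem_ker, hψ, LinearMap.comp_apply, Submodule.mem_comap,
      Submodule.subtype_apply]
    exact (hmem x x.2).symm
  have hrange : LinearMap.range ψ = ⊤ := by
    obtain ⟨x, hxp, hx⟩ := hex
    refine eq_top_iff.2 fun c _ => ?_
    have : c = (c * (φ x)⁻¹) • ψ ⟨x, hxp⟩ := by
      simp [hψ, smul_eq_mul, mul_assoc, inv_mul_cancel₀ hx]
    rw [this]
    exact Submodule.smul_mem _ _ (LinearMap.mem_range_self _ _)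
  have h1 := LinearMap.finrank_range_add_finrank_ker ψ
  rw [hrange, finrank_top, finrank_self, hker,
    (Submodule.comapSubtypeEquivOfLe hle).finrank_eq] at h1
  omega

lemma exists_mulVec_eq (M : Matrix m m F) (hsymm : Mᵀ = M) (u : m → F)
    (h : ∀ x, M.mulVec x = 0 → x ⬝ᵥ u = 0) : ∃ w, M.mulVec w = u := by
  classical
  set T := M.mulVecLin with hT
  set φ : (m → F) →ₗ[F] F :=
    { toFun := fun x => x ⬝ᵥ u
      map_add' := fun x y => add_dotProduct x y u
      map_smul' := fun c x => smul_dotProduct c x u } with hφ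
  have hle : LinearMap.ker T ≤ LinearMap.ker φ := by
    intro x hx
    simp only [LinearMap.mem_ker] at hx ⊢
    exact h x hx
  set q : ((m → F) ⧸ LinearMap.ker T) →ₗ[F] F := Submodule.liftQ _ φ hle with hq
  set ψ0 : LinearMap.range T →ₗ[F] F := q.comp (T.quotKerEquivRange.symm : LinearMap.range T →ₗ[F] _) with hψ0
  obtain ⟨ψ, hψ⟩ := LinearMap.exists_extend ψ0
  have key : ∀ x, ψ (T x) = φ x := by
    intro x
    have h1 : (LinearMap.range T).subtype ⟨T x, LinearMap.mem_range_self T x⟩ = T x := rfl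
    rw [← h1, ← LinearMap.comp_apply, hψ, hψ0]
    simp only [LinearMap.comp_apply, LinearEquiv.coe_coe]
    rw [LinearMap.quotKerEquivRange_symm_apply_image T x (LinearMap.mem_range_self T x)]
    simp [hq]
  set w : m → F := fun i => ψ (Pi.single i 1) with hw
  have hψdot : ∀ y, ψ y = y ⬝ᵥ w := by
    intro y
    rw [LinearMap.pi_apply_eq_sum_univ ψ y]
    refine Finset.sum_congr rfl fun i _ => ?_
    rw [smul_eq_mul, hw]
    have : (fun j => if i = j then (1:F) else 0) = Pi.single i 1 := by
      funext j
      rw [Pi.single_apply]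
      exact if_congr eq_comm rfl rfl
    rw [this]
  refine ⟨w, ?_⟩
  funext i
  have h2 := key (Pi.single i 1)
  rw [hψdot] at h2
  have h3 : (T (Pi.single i 1)) ⬝ᵥ w = (Pi.single i 1) ⬝ᵥ (M.mulVec w) := by
    rw [hT, Matrix.mulVecLin_apply, Matrix.dotProduct_mulVec, ← Matrix.mulVec_transpose, hsymm]
  rw [h3] at h2
  simpa [hφ, single_dotProduct] using h2


end Helpers


/-- If the vertex `v` of a labeled graph `G` is oriented,
i.e. `corank (A(G)+E) ≤ corank B_v(G)` where `B_v(G) = A(G)+E+E_{vv}`, then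
`corank B_v(G) ≠ corank (A(G−v)+E)`. -/
theorem oriented_vertex_corank (G : LGraph) (v : G.verts)
    (h : G.corankAE ≤ G.corankB v) :
    G.corankB v ≠ (G.delete v).corankAE := by
  classical
  set M : Matrix G.verts G.verts (ZMod 2) := G.A + 1 with hM
  set Bm : Matrix G.verts G.verts (ZMod 2) := G.A + 1 + Matrix.single v v 1 with hBm
  -- symmetry
  have hAsymm : (G.A)ᵀ = G.A := by
    ext u w
    simp only [Matrix.transpose_apply, LGraph.A]
    rcases eq_or_ne (u : ℕ) (w : ℕ) with he | hne
    · simp [he]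
    · simp only [if_neg hne, if_neg (Ne.symm hne)]
      rw [G.symm]
  have hsymm : Mᵀ = M := by
    rw [hM, Matrix.transpose_add, Matrix.transpose_one, hAsymm]
  -- basic ZMod 2 facts
  have one_ne : (1 : ZMod 2) ≠ 0 := by decide
  have nz : ∀ a : ZMod 2, a ≠ 0 → a = 1 := by decide
  have hz : ∀ a b : ZMod 2, a + b = 0 ↔ a = b := by decide
  -- B as rank-one update
  have hstd : ∀ x : ↥G.verts → ZMod 2,
      (Matrix.single v v (1 : ZMod 2)).mulVec x = Pi.single v (x v) := by
    intro x
    funext u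
    rw [Matrix.single_mulVec]
    simp [Function.update_apply, Pi.single_apply, eq_comm]
  have hBv : ∀ x, Bm.mulVec x = M.mulVec x + Pi.single v (x v) := by
    intro x
    rw [hBm, Matrix.add_mulVec, hstd, hM]
  -- submodules
  set φv : (↥G.verts → ZMod 2) →ₗ[ZMod 2] ZMod 2 := LinearMap.proj v with hφv
  set φMv : (↥G.verts → ZMod 2) →ₗ[ZMod 2] ZMod 2 :=
    (LinearMap.proj v).comp M.mulVecLin with hφMv
  set K : Submodule (ZMod 2) (↥G.verts → ZMod 2) := LinearMap.ker M.mulVecLin with hK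
  set KB : Submodule (ZMod 2) (↥G.verts → ZMod 2) := LinearMap.ker Bm.mulVecLin with hKB'
  set K0 : Submodule (ZMod 2) (↥G.verts → ZMod 2) := K ⊓ LinearMap.ker φv with hK0
  set W : Submodule (ZMod 2) (↥G.verts → ZMod 2) :=
    LinearMap.ker φv ⊓ Submodule.comap M.mulVecLin
      (⨅ (u : ↥G.verts) (_ : u ≠ v), LinearMap.ker
        (LinearMap.proj u : (↥G.verts → ZMod 2) →ₗ[ZMod 2] ZMod 2)) with hW
  have hKmem : ∀ x, x ∈ K ↔ M.mulVec x = 0 := by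
    intro x; rw [hK]; simp [LinearMap.mem_ker]
  have hK0mem : ∀ x, x ∈ K0 ↔ M.mulVec x = 0 ∧ x v = 0 := by
    intro x; rw [hK0]
    simp [Submodule.mem_inf, hKmem, hφv, LinearMap.mem_ker]
  have hWmem : ∀ x, x ∈ W ↔ x v = 0 ∧ ∀ u, u ≠ v → M.mulVec x u = 0 := by
    intro x; rw [hW]
    simp [Submodule.mem_inf, Submodule.mem_comap, Submodule.mem_iInf, LinearMap.mem_ker, hφv]
  have hKBmem : ∀ x, x ∈ KB ↔ M.mulVec x = Pi.single v (x v) := by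
    intro x
    rw [hKB']
    simp only [LinearMap.mem_ker, Matrix.mulVecLin_apply]
    rw [show Bm.mulVec x = M.mulVec x + Pi.single v (x v) from hBv x]
    constructor
    · intro h0; funext u; exact (hz _ _).1 (congrFun h0 u)
    · intro h0; funext u; exact (hz _ _).2 (congrFun h0 u)
  -- pairing
  have pairing : ∀ x y, x ⬝ᵥ M.mulVec y = M.mulVec x ⬝ᵥ y := by
    intro x y
    rw [Matrix.dotProduct_mulVec, ← Matrix.mulVec_transpose, hsymm]
  have pair01 : ∀ x y : ↥G.verts → ZMod 2,
      M.mulVec x = 0 → x v = 1 → M.mulVec y = Pi.single v 1 → False := by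
    intro x y hx hxv hy
    have h1 : x ⬝ᵥ M.mulVec y = 1 := by
      rw [hy, dotProduct_single, hxv, one_mul]
    rw [pairing, hx, zero_dotProduct] at h1
    exact one_ne h1.symm
  have pairE3 : ∀ x y : ↥G.verts → ZMod 2,
      M.mulVec x = Pi.single v 1 → x v = 0 → M.mulVec y = Pi.single v 1 → y v = 1 → False := by
    intro x y hx hxv hy hyv
    have h1 : x ⬝ᵥ M.mulVec y = 0 := by
      rw [hy, dotProduct_single, hxv, zero_mul]
    rw [pairing, hx, single_dotProduct, one_mul, hyv] at h1
    exact one_ne h1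
  -- inclusions
  have hK0K : K0 ≤ K := by rw [hK0]; exact inf_le_left
  have hK0KB : K0 ≤ KB := by
    intro x hx
    obtain ⟨h1, h2⟩ := (hK0mem x).1 hx
    rw [hKBmem, h2, h1]
    simp
  have hK0W : K0 ≤ W := by
    intro x hx
    obtain ⟨h1, h2⟩ := (hK0mem x).1 hx
    rw [hWmem]
    exact ⟨h2, fun u _ => by rw [h1]; rfl⟩
  -- membership criteria
  have hmemK : ∀ x ∈ K, (x ∈ K0 ↔ φv x = 0) := by
    intro x hx
    rw [hK0mem, hφv]
    simp only [LinearMap.proj_apply]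
    exact ⟨fun h0 => h0.2, fun h0 => ⟨(hKmem x).1 hx, h0⟩⟩
  have hmemKB : ∀ x ∈ KB, (x ∈ K0 ↔ φv x = 0) := by
    intro x hx
    rw [hK0mem, hφv]
    simp only [LinearMap.proj_apply]
    constructor
    · exact fun h0 => h0.2
    · intro h0
      refine ⟨?_, h0⟩
      rw [(hKBmem x).1 hx, h0]
      simp
  have hmemW : ∀ x ∈ W, (x ∈ K0 ↔ φMv x = 0) := by
    intro x hx
    obtain ⟨h1, h2⟩ := (hWmem x).1 hx
    rw [hK0mem, hφMv]
    simp only [LinearMap.comp_apply, LinearMap.proj_apply, Matrix.mulVecLin_apply]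
    constructor
    · intro h0; rw [h0.1]; rfl
    · intro h0
      refine ⟨?_, h1⟩
      funext u
      by_cases hu : u = v
      · rw [hu]; exact h0
      · exact h2 u hu
  -- corank identities
  have hcAE : G.corankAE = Module.finrank (ZMod 2) K := by
    have h1 := rank_add_corank' M
    have h2 : G.corankAE = Fintype.card ↥G.verts - M.rank := rfl
    rw [h2, hK]
    omega
  have hcB : G.corankB v = Module.finrank (ZMod 2) KB := by
    have h1 := rank_add_corank' Bm
    have h2 : G.corankB v = Fintype.card ↥G.verts - Bm.rank := rfl
    rw [h2, hKB']
    omega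
  have hcD : (G.delete v).corankAE = Module.finrank (ZMod 2) W := by
    set M' : Matrix ↥(G.verts.erase ↑v) ↥(G.verts.erase ↑v) (ZMod 2) :=
      (show Matrix ↥(G.verts.erase ↑v) ↥(G.verts.erase ↑v) (ZMod 2) from (G.delete ↑v).A) + 1
      with hM'
    have h1 := rank_add_corank' M'
    have h2 : (G.delete v).corankAE = Fintype.card ↥(G.verts.erase ↑v) - M'.rank := rfl
    set ι : ↥(G.verts.erase ↑v) → ↥G.verts :=
      fun w => ⟨↑w, Finset.mem_of_mem_erase w.2⟩ with hι
    set ext : (↥(G.verts.erase ↑v) → ZMod 2) →ₗ[ZMod 2] (↥G.verts → ZMod 2) :=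
      { toFun := fun y u => if h : (u : ℕ) ∈ G.verts.erase ↑v then y ⟨↑u, h⟩ else 0
        map_add' := by
          intro y z
          funext u
          by_cases h : (u : ℕ) ∈ G.verts.erase ↑v
          · simp only [dif_pos h, Pi.add_apply]
          · simp only [dif_neg h, Pi.add_apply, add_zero]
        map_smul' := by
          intro c y
          funext u
          by_cases h : (u : ℕ) ∈ G.verts.erase ↑v
          · simp only [dif_pos h, Pi.smul_apply, RingHom.id_apply]
          · simp only [dif_neg h, Pi.smul_apply, RingHom.id_apply, smul_zero] } with hext
    have hext_apply : ∀ y (w : ↥(G.verts.erase ↑v)), ext y (ι w) = y w := by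
      intro y w
      simp only [hext, LinearMap.coe_mk, AddHom.coe_mk]
      rw [dif_pos w.2]
    have hext_v : ∀ y, ext y v = 0 := by
      intro y
      simp only [hext, LinearMap.coe_mk, AddHom.coe_mk]
      rw [dif_neg (Finset.notMem_erase _ _)]
    have hext_inj : Function.Injective ext := by
      intro y z hyz
      funext w
      have h3 := congrFun hyz (ι w)
      rwa [hext_apply, hext_apply] at h3
    have hcomp : ∀ w w' : ↥(G.verts.erase ↑v), M' w w' = M (ι w) (ι w') := by
      intro w w'
      have hw : (w : ℕ) ≠ ↑v := (Finset.mem_erase.1 w.2).1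
      have hw' : (w' : ℕ) ≠ ↑v := (Finset.mem_erase.1 w'.2).1
      rw [hM', hM]
      simp only [Matrix.add_apply]
      show (G.delete ↑v).A w w' + (1 : Matrix ↥(G.verts.erase ↑v) ↥(G.verts.erase ↑v) (ZMod 2)) w w' = _
      congr 1
      · show (G.delete ↑v).A w w' = G.A (ι w) (ι w')
        simp only [LGraph.A, LGraph.delete, hι]
        rcases eq_or_ne (w : ℕ) (w' : ℕ) with he | hne
        · simp [he]
        · simp [hne, hw, hw']
      · show (1 : Matrix ↥(G.verts.erase ↑v) ↥(G.verts.erase ↑v) (ZMod 2)) w w'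
            = (1 : Matrix ↥G.verts ↥G.verts (ZMod 2)) (ι w) (ι w')
        simp only [Matrix.one_apply, hι]
        by_cases he : w = w'
        · simp [he]
        · rw [if_neg he, if_neg]
          intro hc
          exact he (Subtype.ext (Subtype.mk_eq_mk.1 hc))
    have hkey : ∀ (y : ↥(G.verts.erase ↑v) → ZMod 2) (u : ↥G.verts) (hu : (u : ℕ) ≠ (↑v : ℕ)),
        M'.mulVec y ⟨↑u, Finset.mem_erase.2 ⟨hu, u.2⟩⟩ = M.mulVec (ext y) u := by
      intro y u hu
      simp only [Matrix.mulVec, dotProduct]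
      rw [← Finset.add_sum_erase Finset.univ (fun u' => M u u' * ext y u') (Finset.mem_univ v)]
      rw [hext_v, mul_zero, zero_add]
      refine Finset.sum_bij' (fun (w : ↥(G.verts.erase ↑v)) (_ : w ∈ Finset.univ) => ι w)
        (fun (u' : ↥G.verts) (hu' : u' ∈ Finset.univ.erase v) =>
          (⟨↑u', Finset.mem_erase.2
            ⟨fun hc => (Finset.mem_erase.1 hu').1 (Subtype.ext hc), u'.2⟩⟩ :
              ↥(G.verts.erase ↑v)))
        ?_ ?_ ?_ ?_ ?_
      · intro w _
        refine Finset.mem_erase.2 ⟨?_, Finset.mem_univ _⟩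
        intro hc
        exact (Finset.mem_erase.1 w.2).1 (congrArg Subtype.val hc)
      · intro u' _
        exact Finset.mem_univ _
      · intro w _
        exact Subtype.ext rfl
      · intro u' _
        exact Subtype.ext rfl
      · intro w _
        rw [hcomp, hext_apply]
    have hxker : ∀ x, x ∈ W → ext (fun w => x (ι w)) = x := by
      intro x hx
      obtain ⟨hx1, _⟩ := (hWmem x).1 hx
      funext u
      simp only [hext, LinearMap.coe_mk, AddHom.coe_mk]
      by_cases hu : (u : ℕ) ∈ G.verts.erase ↑v
      · rw [dif_pos hu]
      · rw [dif_neg hu]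
        have huv : u = v := by
          by_contra hc
          exact hu (Finset.mem_erase.2 ⟨fun hc2 => hc (Subtype.ext hc2), u.2⟩)
        rw [huv]
        exact hx1.symm
    have hmap : Submodule.map ext (LinearMap.ker M'.mulVecLin) = W := by
      apply le_antisymm
      · rintro x ⟨y, hy, rfl⟩
        rw [hWmem]
        refine ⟨hext_v y, fun u hu => ?_⟩
        have hu' : (u : ℕ) ≠ ↑v := fun hc => hu (Subtype.ext hc)
        rw [← hkey y u hu']
        have hy0 : M'.mulVec y = 0 := hy
        rw [hy0]
        rfl
      · intro x hx
        obtain ⟨hx1, hx2⟩ := (hWmem x).1 hx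
        refine ⟨fun w => x (ι w), ?_, hxker x hx⟩
        show M'.mulVec (fun w => x (ι w)) = 0
        have hxe := hxker x hx
        funext w
        have hw : ((ι w : ↥G.verts) : ℕ) ≠ ↑v := (Finset.mem_erase.1 w.2).1
        have h4 := hkey (fun w => x (ι w)) (ι w) hw
        rw [hxe] at h4
        have hιw : (⟨↑(ι w : ↥G.verts), Finset.mem_erase.2 ⟨hw, (ι w).2⟩⟩ :
            ↥(G.verts.erase ↑v)) = w := Subtype.ext rfl
        rw [hιw] at h4
        have h5 : M.mulVec x (ι w) = 0 := hx2 (ι w) (fun hc => hw (congrArg Subtype.val hc))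
        show M'.mulVec (fun w => x (ι w)) w = 0
        rw [h4, h5]
    have h3 : Module.finrank (ZMod 2) (LinearMap.ker M'.mulVecLin)
        = Module.finrank (ZMod 2) W := by
      rw [← hmap]
      exact (Submodule.equivMapOfInjective ext hext_inj (LinearMap.ker M'.mulVecLin)).finrank_eq
    rw [h2, ← h3]
    omega
  -- final case analysis
  by_cases hP10 : ∃ x ∈ K, φv x ≠ 0
  · exfalso
    have hKd : Module.finrank (ZMod 2) K = Module.finrank (ZMod 2) K0 + 1 :=
      finrank_split_pos K K0 φv hmemK hK0K hP10
    have hKBd : Module.finrank (ZMod 2) KB = Module.finrank (ZMod 2) K0 := by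
      refine finrank_split_zero KB K0 φv hmemKB hK0KB ?_
      intro x hx
      by_contra hne
      obtain ⟨y, hyK, hyv⟩ := hP10
      have hyv1 : y v = 1 := nz _ (by simpa [hφv] using hyv)
      have hx1 : M.mulVec x = Pi.single v 1 := by
        have h5 := (hKBmem x).1 hx
        have hxv1 : x v = 1 := nz _ (by simpa [hφv] using hne)
        rwa [hxv1] at h5
      exact pair01 y x ((hKmem y).1 hyK) hyv1 hx1
    rw [hcAE, hcB, hKd, hKBd] at h
    omega
  · intro heq
    rw [hcB, hcD] at heq
    by_cases hP11 : ∃ x ∈ KB, φv x ≠ 0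
    · have h1 : Module.finrank (ZMod 2) KB = Module.finrank (ZMod 2) K0 + 1 :=
        finrank_split_pos KB K0 φv hmemKB hK0KB hP11
      have h2 : Module.finrank (ZMod 2) W = Module.finrank (ZMod 2) K0 := by
        refine finrank_split_zero W K0 φMv hmemW hK0W ?_
        intro x hx
        by_contra hne
        obtain ⟨y, hyKB, hyv⟩ := hP11
        have hyv1 : y v = 1 := nz _ (by simpa [hφv] using hyv)
        have hy1 : M.mulVec y = Pi.single v 1 := by
          have := (hKBmem y).1 hyKB
          rwa [hyv1] at this
        obtain ⟨hx1, hx2⟩ := (hWmem x).1 hx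
        have hxMv : M.mulVec x v = 1 := nz _ (by simpa [hφMv] using hne)
        have hxs : M.mulVec x = Pi.single v 1 := by
          funext u
          by_cases hu : u = v
          · rw [hu, hxMv]; simp
          · rw [hx2 u hu]; simp [Pi.single_apply, hu]
        exact pairE3 x y hxs hx1 hy1 hyv1
      omega
    · by_cases hP01 : ∃ x ∈ W, φMv x ≠ 0
      · have h1 : Module.finrank (ZMod 2) W = Module.finrank (ZMod 2) K0 + 1 :=
          finrank_split_pos W K0 φMv hmemW hK0W hP01
        have h2 : Module.finrank (ZMod 2) KB = Module.finrank (ZMod 2) K0 := by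
          refine finrank_split_zero KB K0 φv hmemKB hK0KB ?_
          intro x hx
          by_contra hne
          obtain ⟨y, hyW, hyv⟩ := hP01
          obtain ⟨hy1, hy2⟩ := (hWmem y).1 hyW
          have hyMv : M.mulVec y v = 1 := nz _ (by simpa [hφMv] using hyv)
          have hys : M.mulVec y = Pi.single v 1 := by
            funext u
            by_cases hu : u = v
            · rw [hu, hyMv]; simp
            · rw [hy2 u hu]; simp [Pi.single_apply, hu]
          have hxv1 : x v = 1 := nz _ (by simpa [hφv] using hne)
          have hxs : M.mulVec x = Pi.single v 1 := by
            have := (hKBmem x).1 hx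
            rwa [hxv1] at this
          exact pairE3 y x hys hy1 hxs hxv1
        omega
      · push_neg at hP10 hP11 hP01
        have hdot : ∀ x, M.mulVec x = 0 → x ⬝ᵥ Pi.single v (1 : ZMod 2) = 0 := by
          intro x hx
          rw [dotProduct_single, mul_one]
          simpa [hφv] using hP10 x ((hKmem x).2 hx)
        obtain ⟨w, hw⟩ := exists_mulVec_eq M hsymm (Pi.single v (1 : ZMod 2)) hdot
        by_cases hwv : w v = 0
        · have hwW : w ∈ W := by
            rw [hWmem]
            refine ⟨hwv, fun u hu => ?_⟩
            rw [hw]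
            simp [Pi.single_apply, hu]
          have h0 := hP01 w hwW
          rw [hφMv] at h0
          simp only [LinearMap.comp_apply, LinearMap.proj_apply,
            Matrix.mulVecLin_apply, hw] at h0
          exact one_ne (by simpa using h0)
        · have hwKB : w ∈ KB := by
            rw [hKBmem, nz _ hwv, hw]
          have h0 := hP11 w hwKB
          rw [hφv] at h0
          simp only [LinearMap.proj_apply] at h0
          exact hwv h0
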